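/- Let E be a real inner product space, let m ≥ 1, let H₁, …, H_m ∈ E be nonzero vectors and h₁, …, h_m ∈ ℝ, and let z ∈ E satisfy ⟪H_i, z⟫ ≤ h_i for all i = 1, …, m. Then the distance from z to the complement of the polyhedron D = {y ∈ E | ⟪H_i, y⟫ ≤ h_i, i = 1, …, m} equals the minimum over the faces of the distances to the supporting hyperplanes: infDist(z, Dᶜ) = min_{1 ≤ i ≤ m} (h_i − ⟪H_i, z⟫)/‖H_i‖. -/

import Mathlib

open scoped RealInnerProductSpace

/-- Distance from an interior point of a polyhedron to its complement equals the
minimum of the distances to the supporting hyperplanes of the faces. -/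
theorem infDist_compl_polyhedron {E : Type*} [NormedAddCommGroup E] [InnerProductSpace ℝ E]
    (m : ℕ) (hm : 1 ≤ m) (H : Fin m → E) (hH : ∀ i, H i ≠ 0) (h : Fin m → ℝ)
    (z : E) (hz : ∀ i, ⟪H i, z⟫ ≤ h i) :
    Metric.infDist z {y : E | ∀ i, ⟪H i, y⟫ ≤ h i}ᶜ =
      Finset.univ.inf' ⟨⟨0, hm⟩, Finset.mem_univ _⟩
        (fun i => (h i - ⟪H i, z⟫) / ‖H i‖) := by
  have key : ∀ (i : Fin m) (t : ℝ), ⟪H i, z + t • H i⟫ = ⟪H i, z⟫ + t * ‖H i‖ ^ 2 := by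
    intro i t
    rw [inner_add_right, real_inner_smul_right, real_inner_self_eq_norm_sq]
  have hnorm : ∀ i : Fin m, (0:ℝ) < ‖H i‖ := fun i => norm_pos_iff.2 (hH i)
  -- points in the complement
  have hpt : ∀ (i : Fin m) (δ : ℝ), 0 < δ →
      (z + ((h i - ⟪H i, z⟫ + δ) / ‖H i‖ ^ 2) • H i) ∈ {y : E | ∀ j, ⟪H j, y⟫ ≤ h j}ᶜ := by
    intro i δ hδ
    intro hy
    have := hy i
    rw [key i] at this
    rw [div_mul_cancel₀ _ (pow_pos (hnorm i) 2).ne'] at this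
    linarith
  have hne : ({y : E | ∀ j, ⟪H j, y⟫ ≤ h j}ᶜ).Nonempty :=
    ⟨_, hpt ⟨0, hm⟩ 1 one_pos⟩
  have hdistpt : ∀ (i : Fin m) (δ : ℝ), 0 < δ →
      dist z (z + ((h i - ⟪H i, z⟫ + δ) / ‖H i‖ ^ 2) • H i) = (h i - ⟪H i, z⟫ + δ) / ‖H i‖ := by
    intro i δ hδ
    rw [dist_eq_norm]
    have : z - (z + ((h i - ⟪H i, z⟫ + δ) / ‖H i‖ ^ 2) • H i)
        = -(((h i - ⟪H i, z⟫ + δ) / ‖H i‖ ^ 2) • H i) := by abel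
    rw [this, norm_neg, norm_smul, Real.norm_eq_abs,
      abs_of_nonneg (div_nonneg (by have := hz i; linarith) (by positivity))]
    have hn := (hnorm i).ne'
    field_simp
  refine le_antisymm ?_ ?_
  · apply Finset.le_inf'
    intro i _
    refine le_of_forall_pos_le_add fun ε hε => ?_
    have hδ : 0 < ε * ‖H i‖ := mul_pos hε (hnorm i)
    calc Metric.infDist z {y : E | ∀ j, ⟪H j, y⟫ ≤ h j}ᶜ
        ≤ dist z (z + ((h i - ⟪H i, z⟫ + ε * ‖H i‖) / ‖H i‖ ^ 2) • H i) :=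
          Metric.infDist_le_dist_of_mem (hpt i _ hδ)
      _ = (h i - ⟪H i, z⟫ + ε * ‖H i‖) / ‖H i‖ := hdistpt i _ hδ
      _ = (h i - ⟪H i, z⟫) / ‖H i‖ + ε := by
          rw [add_div, mul_div_cancel_right₀ _ (hnorm i).ne']
  · have : Nonempty ↥({y : E | ∀ j, ⟪H j, y⟫ ≤ h j}ᶜ) := hne.to_subtype
    rw [Metric.infDist_eq_iInf]
    apply le_ciInf
    rintro ⟨y, hy⟩
    simp only [Set.mem_compl_iff, Set.mem_setOf_eq, not_forall, not_le] at hy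
    obtain ⟨i, hi⟩ := hy
    refine le_trans (Finset.inf'_le _ (Finset.mem_univ i)) ?_
    have h1 : h i - ⟪H i, z⟫ ≤ ⟪H i, y - z⟫ := by
      rw [inner_sub_right]; linarith
    have h2 : ⟪H i, y - z⟫ ≤ ‖H i‖ * ‖y - z‖ := real_inner_le_norm _ _
    rw [div_le_iff₀ (hnorm i), dist_eq_norm, norm_sub_rev]
    calc h i - ⟪H i, z⟫ ≤ ‖H i‖ * ‖y - z‖ := h1.trans h2
      _ = ‖y - z‖ * ‖H i‖ := mul_comm _ _
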